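/- Let ℓ > √2·π and define φ(ε) = sin(2πε/ℓ). Then φ is ℓ-periodic, ∫₀^ℓ φ(ε) dε = 0, and 2·∫₀^ℓ φ'(ε)² dε − 4·∫₀^ℓ φ(ε)² dε = 4π²/ℓ − 2ℓ < 0. -/

import Mathlib

open Real

theorem stmt_10 (L : ℝ) (hL : Real.sqrt 2 * π < L) (φ : ℝ → ℝ)
    (hφ : ∀ ε : ℝ, φ ε = Real.sin (2 * π * ε / L)) :
    Function.Periodic φ L ∧ (∫ ε in (0:ℝ)..L, φ ε) = 0 ∧
    2 * (∫ ε in (0:ℝ)..L, (deriv φ ε) ^ 2) - 4 * (∫ ε in (0:ℝ)..L, (φ ε) ^ 2)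
      = 4 * π ^ 2 / L - 2 * L ∧
    4 * π ^ 2 / L - 2 * L < 0 := by
  have hsq : (0:ℝ) < Real.sqrt 2 * π := by positivity
  have hL0 : (0:ℝ) < L := hsq.trans hL
  have hLne : L ≠ 0 := ne_of_gt hL0
  set c : ℝ := 2 * π / L with hc
  have hcne : c ≠ 0 := by
    have : (2:ℝ) * π ≠ 0 := by positivity
    simp [hc, div_eq_zero_iff, this, hLne]
  have hφ' : ∀ ε, φ ε = Real.sin (c * ε) := by
    intro ε; rw [hφ ε, hc]; ring_nf
  have hderiv : ∀ ε, deriv φ ε = c * Real.cos (c * ε) := by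
    intro ε
    have h1 : HasDerivAt (fun x : ℝ => Real.sin (c * x)) (Real.cos (c * ε) * c) ε := by
      exact (Real.hasDerivAt_sin (c * ε)).comp ε (by simpa using (hasDerivAt_id ε).const_mul c)
    have h2 : HasDerivAt φ (Real.cos (c * ε) * c) ε := by
      have : φ = fun x : ℝ => Real.sin (c * x) := funext hφ'
      rw [this]; exact h1
    rw [h2.deriv]; ring
  have hcL : c * L = 2 * π := by rw [hc]; field_simp
  constructor
  · intro x
    rw [hφ' (x + L), hφ' x]
    have : c * (x + L) = c * x + 2 * π := by rw [mul_add, hcL]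
    rw [this, Real.sin_add_two_pi]
  refine ⟨?_, ?_, ?_⟩
  · have := intervalIntegral.integral_comp_mul_left (a := (0:ℝ)) (b := L)
      (fun x => Real.sin x) hcne
    simp only [hφ']
    rw [this, mul_zero, hcL, integral_sin]
    simp
  · have hsin := intervalIntegral.integral_comp_mul_left (a := (0:ℝ)) (b := L)
      (fun x => Real.sin x ^ 2) hcne
    have hcos := intervalIntegral.integral_comp_mul_left (a := (0:ℝ)) (b := L)
      (fun x => Real.cos x ^ 2) hcne
    simp only [mul_zero, hcL] at hsin hcos
    have hpi : π ≠ 0 := Real.pi_ne_zero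
    have hsinint : (∫ x in (0:ℝ)..2*π, Real.sin x ^ 2) = π := by
      rw [integral_sin_sq]; simp [Real.sin_two_pi]
    have hcosint : (∫ x in (0:ℝ)..2*π, Real.cos x ^ 2) = π := by
      rw [integral_cos_sq]; simp [Real.sin_two_pi]
    have hI1 : (∫ ε in (0:ℝ)..L, (φ ε) ^ 2) = L / 2 := by
      simp only [hφ']
      rw [hsin, hsinint, smul_eq_mul, hc]
      field_simp
    have hI2 : (∫ ε in (0:ℝ)..L, (deriv φ ε) ^ 2) = c ^ 2 * (L / 2) := by
      simp only [hderiv, mul_pow]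
      rw [intervalIntegral.integral_const_mul, hcos, hcosint, smul_eq_mul, hc]
      field_simp
    rw [hI1, hI2, hc]
    field_simp
    ring
  · have h2 : 2 * π ^ 2 < L ^ 2 := by
      have h3 : (Real.sqrt 2 * π) ^ 2 < L ^ 2 := by
        apply pow_lt_pow_left₀ hL (le_of_lt hsq)
        norm_num
      calc 2 * π ^ 2 = (Real.sqrt 2 * π) ^ 2 := by
            rw [mul_pow, Real.sq_sqrt (by norm_num : (0:ℝ) ≤ 2)]
        _ < L ^ 2 := h3
    rw [div_sub' hLne, div_neg_iff]
    right
    refine ⟨by nlinarith, hL0⟩
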